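/- Fix an integer s ≥ 1. Let F₂ be the free group on two generators a, b, let F₂⁺ be the submonoid generated by a and b, and order F₂ by x ≤ y iff x⁻¹y ∈ F₂⁺. Let A = ⟨a^s⟩ be the cyclic subgroup generated by a^s. Then every left coset xA of A in F₂ with xA ∩ F₂⁺ ≠ ∅ contains a minimal representative in F₂⁺: there exists p ∈ xA ∩ F₂⁺ such that q ∈ xA ∩ F₂⁺ implies p ≤ q. -/
import Mathlib


/-- The left-invariant relation `x ≤ y ↔ x⁻¹ * y ∈ P` associated to a submonoid `P`. -/
def QLO.le {G : Type*} [Group G] (P : Submonoid G) (x y : G) : Prop := x⁻¹ * y ∈ P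

/-- The free group on two generators `a = of true` and `b = of false`. -/
abbrev F₂ : Type := FreeGroup Bool

/-- The submonoid of `F₂` generated by the two generators. -/
def F₂pos : Submonoid F₂ := Submonoid.closure {FreeGroup.of true, FreeGroup.of false}

/-- Exponent-sum homomorphism. -/
def QLOphi : F₂ →* Multiplicative ℤ := FreeGroup.lift fun _ => Multiplicative.ofAdd 1

lemma QLOphi_of (b : Bool) : (QLOphi (FreeGroup.of b)).toAdd = 1 := by
  simp [QLOphi]

lemma QLOphi_nonneg {p : F₂} (hp : p ∈ F₂pos) : 0 ≤ (QLOphi p).toAdd := by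
  induction hp using Submonoid.closure_induction with
  | mem x hx =>
    rcases hx with h | h <;> subst h <;> simp [QLOphi_of]
  | one => simp
  | mul x y _ _ hx hy => rw [map_mul, toAdd_mul]; omega

lemma a_mem_F₂pos : FreeGroup.of true ∈ F₂pos :=
  Submonoid.subset_closure (Or.inl rfl)

theorem stmt16 (s : ℕ) (hs : 1 ≤ s) (A : Subgroup F₂)
    (hA : A = Subgroup.zpowers (FreeGroup.of true ^ s)) :
    ∀ x : F₂, (∃ q ∈ F₂pos, x⁻¹ * q ∈ A) →
      ∃ p ∈ F₂pos, x⁻¹ * p ∈ A ∧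
        ∀ q ∈ F₂pos, x⁻¹ * q ∈ A → QLO.le F₂pos p q := by
  intro x ⟨q, hq, hxq⟩
  set a : F₂ := FreeGroup.of true with ha
  -- the set of integers n with q * (a^s)^n positive
  set S : ℤ → Prop := fun n => q * (a ^ s) ^ n ∈ F₂pos with hS
  have hS0 : S 0 := by simpa [hS] using hq
  -- value of phi on (a^s)^n
  have hphi_pow : ∀ n : ℤ, (QLOphi ((a ^ s) ^ n)).toAdd = (s : ℤ) * n := by
    intro n
    rw [map_zpow, map_pow]
    simp [ha, toAdd_zpow, toAdd_pow, QLOphi_of, mul_comm]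
  have hbdd : ∀ n : ℤ, S n → -(QLOphi q).toAdd ≤ n := by
    intro n hn
    have h1 : 0 ≤ (QLOphi (q * (a ^ s) ^ n)).toAdd := QLOphi_nonneg hn
    rw [map_mul, toAdd_mul, hphi_pow] at h1
    have hq0 : 0 ≤ (QLOphi q).toAdd := QLOphi_nonneg hq
    rcases le_or_gt 0 n with h | h
    · omega
    · nlinarith [(by exact_mod_cast hs : (1:ℤ) ≤ (s:ℤ))]
  obtain ⟨n₀, hn₀S, hn₀min⟩ := Int.exists_least_of_bdd
    ⟨-(QLOphi q).toAdd, hbdd⟩ ⟨0, hS0⟩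
  refine ⟨q * (a ^ s) ^ n₀, hn₀S, ?_, ?_⟩
  · rw [← mul_assoc]
    exact A.mul_mem hxq (by rw [hA]; exact ⟨n₀, rfl⟩)
  · intro q' hq' hxq'
    -- q⁻¹ * q' ∈ A, so q' = q * (a^s)^n
    have hmem : q⁻¹ * q' ∈ A := by
      have := A.mul_mem (A.inv_mem hxq) hxq'
      simpa [mul_assoc] using this
    rw [hA] at hmem
    obtain ⟨n, hn⟩ := hmem
    have hq'eq : q' = q * (a ^ s) ^ n := by
      dsimp only at hn
      rw [hn]; group
    have hnS : S n := by rw [hS]; simpa [← hq'eq] using hq'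
    have hle : n₀ ≤ n := hn₀min n hnS
    -- p⁻¹ q' = (a^s)^(n - n₀)
    unfold QLO.le
    have : (q * (a ^ s) ^ n₀)⁻¹ * q' = (a ^ s) ^ (n - n₀) := by
      rw [hq'eq]; group
    rw [this]
    obtain ⟨k, hk⟩ : ∃ k : ℕ, n - n₀ = (k : ℤ) := ⟨(n - n₀).toNat, by omega⟩
    rw [hk, zpow_natCast]
    exact Submonoid.pow_mem _ (Submonoid.pow_mem _ a_mem_F₂pos s) k
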